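/- Suppose each x_i is divisible by t, say x_i = t·y_i. Then η_t(Kos_R(x₁,…,x_d)) is isomorphic to Kos_R(y₁,…,y_d) as cochain complexes of R-modules. -/

import Mathlib

noncomputable section

variable {R : Type*} [CommRing R]

/-- The degree-`n` term of the Koszul complex `Kos_R(x₁, …, x_d)`:
functions from `n`-element subsets of `Fin d` to `R`. -/
abbrev KosT (d : ℕ) (R : Type*) (n : ℕ) : Type _ :=
  {s : Finset (Fin d) // s.card = n} → R

/-- The Koszul differential associated to a family `x : Fin d → R` of ring elements:
`(dω)(s) = Σ_{i ∈ s} (-1)^{#{j ∈ s : j < i}} · x i · ω (s \ {i})`. -/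
noncomputable def kosD {d : ℕ} (x : Fin d → R) (n : ℕ) :
    KosT d R n →ₗ[R] KosT d R (n + 1) where
  toFun ω s := ∑ i ∈ s.1.attach,
    ((-1 : ℤ) ^ ((s.1.filter (fun j => j < i.1)).card)) •
      (x i.1 * ω ⟨s.1.erase i.1, by simp [Finset.card_erase_of_mem i.2, s.2]⟩)
  map_add' ω ω' := by
    funext s
    simp [Finset.sum_add_distrib, smul_add, mul_add]
  map_smul' r ω := by
    funext s
    simp [Finset.smul_sum, mul_smul_comm, smul_comm r]
    rw [Finset.mul_sum]
    exact Finset.sum_congr rfl fun i _ => by ring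

/-- The degree-`n` piece of the décalage `η_t(Kos_R(x₁, …, x_d))`, viewed inside the Koszul
complex itself (legitimate because `δ(i) = i ≥ 0` in the relevant degrees):
`(η_t K)^n = { ω ∈ t^n K^n : dω ∈ t^{n+1} K^{n+1} }`. -/
noncomputable def etaSub {d : ℕ} (t : R) (x : Fin d → R) (n : ℕ) :
    Submodule R (KosT d R n) :=
  LinearMap.range ((t ^ n) • (LinearMap.id : KosT d R n →ₗ[R] KosT d R n)) ⊓
    Submodule.comap (kosD x n)
      (LinearMap.range ((t ^ (n + 1)) • (LinearMap.id : KosT d R (n + 1) →ₗ[R] KosT d R (n + 1))))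

/-- **Décalage of a Koszul complex.** Let `R` be a commutative ring, `t ∈ R` a
non-zero-divisor, and `x₁, …, x_d ∈ R` all divisible by `t`, say `x_i = t·y_i`.  Then
`η_t(Kos_R(x₁, …, x_d))` is isomorphic to `Kos_R(y₁, …, y_d)` as cochain complexes of
`R`-modules.  (The differential of the subcomplex `η_t(Kos)` is the restriction of the
Koszul differential, encoded below via the hypothesis `↑w = (kosD x n) ↑z`.) -/
theorem stmt_14 {d : ℕ} (t : R) (ht : t ∈ nonZeroDivisors R)
    (x y : Fin d → R) (hxy : ∀ i, x i = t * y i) :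
    ∃ e : ∀ n : ℕ, (etaSub t x n) ≃ₗ[R] KosT d R n,
      ∀ (n : ℕ) (z : etaSub t x n) (w : etaSub t x (n + 1)),
        (w : KosT d R (n + 1)) = kosD x n (z : KosT d R n) →
          kosD y n (e n z) = e (n + 1) w := by
  -- `d_x = t • d_y`
  have hd : ∀ (n : ℕ) (ω : KosT d R n), kosD x n ω = t • kosD y n ω := by
    intro n ω
    funext s
    simp only [kosD, LinearMap.coe_mk, AddHom.coe_mk, Pi.smul_apply, smul_eq_mul,
      Finset.mul_sum, mul_zsmul']
    refine Finset.sum_congr rfl fun i _ => ?_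
    rw [hxy i.1, mul_assoc, mul_smul_comm]
  -- cancellation of `t ^ k`
  have hcanc : ∀ (k m : ℕ) (f g : KosT d R m), t ^ k • f = t ^ k • g → f = g := by
    intro k m f g h
    funext s
    have := congrFun h s
    simp only [Pi.smul_apply, smul_eq_mul] at this
    exact (mul_cancel_left_mem_nonZeroDivisors (pow_mem ht k)).mp this
  -- the map `σ ↦ t ^ n • σ` lands in `etaSub`
  have hmem : ∀ (n : ℕ) (σ : KosT d R n), t ^ n • σ ∈ etaSub t x n := by
    intro n σ
    refine ⟨⟨σ, rfl⟩, ⟨kosD y n σ, ?_⟩⟩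
    simp only [LinearMap.smul_apply, LinearMap.id_coe, id_eq, map_smul, hd n σ,
      smul_smul, pow_succ]
  let φ : ∀ n : ℕ, KosT d R n →ₗ[R] etaSub t x n := fun n =>
    { toFun := fun σ => ⟨t ^ n • σ, hmem n σ⟩
      map_add' := fun a b => by
        ext s
        simp only [Submodule.coe_add, Pi.smul_apply, Pi.add_apply, smul_eq_mul]
        ring
      map_smul' := fun r a => by
        ext s
        simp only [SetLike.val_smul, Pi.smul_apply, smul_eq_mul, RingHom.id_apply]
        ring }
  have hbij : ∀ n, Function.Bijective (φ n) := by
    intro n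
    constructor
    · intro a b h
      exact hcanc n n a b (congrArg Subtype.val h)
    · rintro ⟨z, ⟨σ, hσ⟩, -⟩
      refine ⟨σ, Subtype.ext ?_⟩
      exact (by simpa using hσ : t ^ n • σ = z)
  refine ⟨fun n => (LinearEquiv.ofBijective (φ n) (hbij n)).symm, ?_⟩
  intro n z w hw
  set σ := (LinearEquiv.ofBijective (φ n) (hbij n)).symm z with hσ
  set τ := (LinearEquiv.ofBijective (φ (n + 1)) (hbij (n + 1))).symm w with hτ
  have hz : t ^ n • σ = (z : KosT d R n) := by
    have := (LinearEquiv.ofBijective (φ n) (hbij n)).apply_symm_apply z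
    exact congrArg Subtype.val this
  have hwτ : t ^ (n + 1) • τ = (w : KosT d R (n + 1)) := by
    have := (LinearEquiv.ofBijective (φ (n + 1)) (hbij (n + 1))).apply_symm_apply w
    exact congrArg Subtype.val this
  refine hcanc (n + 1) (n + 1) _ _ ?_
  rw [hwτ, hw, ← hz, map_smul, hd n σ, smul_smul, pow_succ]
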